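/- Let d be a squarefree positive integer with d ≡ 3 (mod 8) and d ≠ 3, and let z be the smallest odd prime such that the Legendre symbol (−d / z) is not equal to −1 (i.e., z divides d or −d is a nonzero square modulo z). Then there do not exist positive integers a and b with 4 dividing a² + d·b² such that the number ((a + 2i)² + d·b²)/4 is prime for every i = 0, 1, …, z − 1. Equivalently, there is no proper elliptic list over d of length n ≥ z. -/

import Mathlib

/-- Theorem 4.3: let `d ≡ 3 (mod 8)` be squarefree with `d ≠ 3`, and let `z` be the smallest
odd prime with Legendre symbol `(−d / z) ≠ −1`. Then there is no proper elliptic list over `d`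
of length `≥ z`, i.e. there are no positive integers `a, b` with `4 ∣ a² + d·b²` such that
`((a + 2i)² + d·b²)/4` is prime for every `i = 0, …, z − 1`. -/
theorem stmt_17 (d : ℕ) (hd : Squarefree d) (hdpos : 0 < d) (hd8 : d % 8 = 3) (hd3 : d ≠ 3)
    (z : ℕ) (hz : z.Prime) (hzodd : Odd z)
    (hzsym : @legendreSym z ⟨hz⟩ (-(d : ℤ)) ≠ -1)
    (hzmin : ∀ z' : ℕ, (hz' : z'.Prime) → Odd z' →
      @legendreSym z' ⟨hz'⟩ (-(d : ℤ)) ≠ -1 → z ≤ z') :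
    ¬ ∃ a b : ℕ, 0 < a ∧ 0 < b ∧ 4 ∣ a ^ 2 + d * b ^ 2 ∧
        ∀ i < z, (((a + 2 * i) ^ 2 + d * b ^ 2) / 4).Prime := by
  rintro ⟨a, b, ha, hb, hdvd4, hprime⟩
  haveI : Fact z.Prime := ⟨hz⟩
  haveI : NeZero z := ⟨hz.pos.ne'⟩
  have hz2 : z ≠ 2 := by rintro rfl; exact (by decide : ¬ Odd 2) hzodd
  have hz3 : 3 ≤ z := by have := hz.two_le; omega
  have h2z : (2 : ZMod z) ≠ 0 := by
    intro h
    have : z ∣ 2 := (ZMod.natCast_eq_zero_iff 2 z).mp (by exact_mod_cast h)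
    have := Nat.le_of_dvd (by norm_num) this
    omega
  -- key: for any residue r with r^2 + d b^2 = 0 mod z, find i < z with a+2i ≡ r and value = 4z
  have key : ∀ r : ZMod z, r ^ 2 + (d : ZMod z) * (b : ZMod z) ^ 2 = 0 →
      ∃ i < z, ((a : ZMod z) + 2 * (i : ZMod z) = r) ∧ (a + 2 * i) ^ 2 + d * b ^ 2 = 4 * z := by
    intro r hr
    refine ⟨((r - (a : ZMod z)) * (2 : ZMod z)⁻¹).val, ZMod.val_lt _, ?_, ?_⟩
    · rw [ZMod.natCast_val, ZMod.cast_id]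
      field_simp
      ring
    · set i := ((r - (a : ZMod z)) * (2 : ZMod z)⁻¹).val with hi
      have hci : (a : ZMod z) + 2 * (i : ZMod z) = r := by
        rw [hi, ZMod.natCast_val, ZMod.cast_id]; field_simp; ring
      have h4 : 4 ∣ (a + 2 * i) ^ 2 + d * b ^ 2 := by
        have hexp : (a + 2 * i) ^ 2 + d * b ^ 2 = (a ^ 2 + d * b ^ 2) + 4 * (a * i + i ^ 2) := by
          ring
        rw [hexp]
        exact dvd_add hdvd4 ⟨a * i + i ^ 2, rfl⟩
      have hzdvd : z ∣ (a + 2 * i) ^ 2 + d * b ^ 2 := by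
        have : (((a + 2 * i) ^ 2 + d * b ^ 2 : ℕ) : ZMod z) = 0 := by
          push_cast
          rw [hci]
          exact hr
        exact (ZMod.natCast_eq_zero_iff _ _).mp this
      have hval : 4 * (((a + 2 * i) ^ 2 + d * b ^ 2) / 4) = (a + 2 * i) ^ 2 + d * b ^ 2 :=
        Nat.mul_div_cancel' h4
      have hN := hprime i (ZMod.val_lt _)
      have hzN : z ∣ ((a + 2 * i) ^ 2 + d * b ^ 2) / 4 := by
        have hz4 : ¬ z ∣ 4 := by
          intro h
          have h2 : z ∣ 2 := hz.dvd_of_dvd_pow (show z ∣ 2 ^ 2 by norm_num [h])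
          have := Nat.le_of_dvd (by norm_num) h2
          omega
        rcases (Nat.Prime.dvd_mul hz).mp (hval ▸ hzdvd) with h | h
        · exact absurd h hz4
        · exact h
      have : ((a + 2 * i) ^ 2 + d * b ^ 2) / 4 = z :=
        ((Nat.prime_dvd_prime_iff_eq hz hN).mp hzN).symm
      omega
  by_cases hzd : z ∣ d
  · -- case z ∣ d
    have hd0 : (d : ZMod z) = 0 := (ZMod.natCast_eq_zero_iff d z).mpr hzd
    obtain ⟨i, hi, hci, heq⟩ := key 0 (by simp [hd0])
    have hzc : z ∣ a + 2 * i := by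
      have : ((a + 2 * i : ℕ) : ZMod z) = 0 := by push_cast; simpa using hci
      exact (ZMod.natCast_eq_zero_iff _ _).mp this
    have h1 : z ≤ a + 2 * i := Nat.le_of_dvd (by omega) hzc
    have h2 : z ≤ d := Nat.le_of_dvd hdpos hzd
    have hsq : z ^ 2 ≤ (a + 2 * i) ^ 2 := Nat.pow_le_pow_left h1 2
    have hb2 : 1 ≤ b ^ 2 := Nat.one_le_pow _ _ hb
    have hdb : d ≤ d * b ^ 2 := Nat.le_mul_of_pos_right d (by omega)
    have hzle : z ≤ 3 := by nlinarith
    have hzeq : z = 3 := by omega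
    have hd4 : 4 ≤ d := by omega
    have hdb4 : 4 ≤ d * b ^ 2 := le_trans hd4 hdb
    have h9 : 9 ≤ (a + 2 * i) ^ 2 := by
      calc (9 : ℕ) = 3 ^ 2 := by norm_num
      _ ≤ (a + 2 * i) ^ 2 := Nat.pow_le_pow_left (by omega) 2
    omega
  · have hdz : (d : ZMod z) ≠ 0 := fun h => hzd ((ZMod.natCast_eq_zero_iff d z).mp h)
    have hne : ((-(d : ℤ) : ℤ) : ZMod z) ≠ 0 := by
      push_cast
      exact neg_ne_zero.mpr hdz
    have h1 : legendreSym z (-(d : ℤ)) = 1 :=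
      (legendreSym.eq_one_or_neg_one _ hne).resolve_right hzsym
    have hsq : IsSquare (((-(d : ℤ) : ℤ) : ZMod z)) := (legendreSym.eq_one_iff _ hne).mp h1
    obtain ⟨x, hx⟩ := hsq
    have hx' : x * x = -(d : ZMod z) := by
      rw [← hx]; push_cast; ring
    by_cases hzb : z ∣ b
    · -- case z ∣ b
      have hb0 : (b : ZMod z) = 0 := (ZMod.natCast_eq_zero_iff b z).mpr hzb
      obtain ⟨i, hi, hci, heq⟩ := key 0 (by simp [hb0])
      have hzc : z ∣ a + 2 * i := by
        have : ((a + 2 * i : ℕ) : ZMod z) = 0 := by push_cast; simpa using hci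
        exact (ZMod.natCast_eq_zero_iff _ _).mp this
      have h1c : z ≤ a + 2 * i := Nat.le_of_dvd (by omega) hzc
      have h2b : z ≤ b := Nat.le_of_dvd (by omega) hzb
      have hsqc : z ^ 2 ≤ (a + 2 * i) ^ 2 := Nat.pow_le_pow_left h1c 2
      have hsqb : z ^ 2 ≤ b ^ 2 := Nat.pow_le_pow_left h2b 2
      have hdb : b ^ 2 ≤ d * b ^ 2 := Nat.le_mul_of_pos_left _ hdpos
      nlinarith
    · -- case z ∤ d, z ∤ b : two distinct roots
      have hb0 : (b : ZMod z) ≠ 0 := fun h => hzb ((ZMod.natCast_eq_zero_iff b z).mp h)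
      have hs1 : (x * (b : ZMod z)) ^ 2 + (d : ZMod z) * (b : ZMod z) ^ 2 = 0 := by
        have : (x * (b : ZMod z)) ^ 2 = (x * x) * (b : ZMod z) ^ 2 := by ring
        rw [this, hx']; ring
      have hs2 : (-(x * (b : ZMod z))) ^ 2 + (d : ZMod z) * (b : ZMod z) ^ 2 = 0 := by
        rw [neg_sq]; exact hs1
      obtain ⟨i₁, hi₁, hc₁, he₁⟩ := key (x * (b : ZMod z)) hs1
      obtain ⟨i₂, hi₂, hc₂, he₂⟩ := key (-(x * (b : ZMod z))) hs2
      have hceq : (a + 2 * i₁) ^ 2 = (a + 2 * i₂) ^ 2 := by omega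
      have hc : a + 2 * i₁ = a + 2 * i₂ :=
        Nat.pow_left_injective (by norm_num) hceq
      have hii : i₁ = i₂ := by omega
      subst hii
      have h2s : (2 : ZMod z) * (x * (b : ZMod z)) = 0 := by
        have := hc₁.symm.trans hc₂
        linear_combination this
      rcases mul_eq_zero.mp h2s with h | h
      · exact h2z h
      · rcases mul_eq_zero.mp h with h | h
        · apply hdz
          have : -(d : ZMod z) = 0 := by rw [← hx', h]; ring
          simpa using this
        · exact hb0 h
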